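/- Let c₀ < 0, c₁ ∈ (0,1), and μ₀² = c₀c₁/(c₁⁴ − 1) (which is positive). Define A(t) as the 2×4 matrix A = D·B(t) where D = diag(c₁, 1/c₁) and B(t) = [[1, 0, cos(μ₀t), −sin(μ₀t)], [0, 1, sin(μ₀t), cos(μ₀t)]]. Let f¹, f² : ℝ² → ℝ be an anti-CR pair and v(z) = (z₁, z₂, f¹(z), f²(z)). Then for φ = A v: (i) det(dφ) = 1 − |∇f¹|² is independent of t; (ii) the quantity h(z,t) = Σ_{i=1}^{2} det(∇∂ₜφ_i, ∇φ_i) + det(∇ρ, ∇Y) with ρ = c₀ z₂ and Y(z,t) = ∫₀ᵗ φ₂ ds is independent of t. -/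

import Mathlib

noncomputable def pd1 (f : ℝ × ℝ → ℝ) (z : ℝ × ℝ) : ℝ := fderiv ℝ f z ((1:ℝ), (0:ℝ))
noncomputable def pd2 (f : ℝ × ℝ → ℝ) (z : ℝ × ℝ) : ℝ := fderiv ℝ f z ((0:ℝ), (1:ℝ))

/-- det(∇u, ∇w). -/
noncomputable def det2 (u w : ℝ × ℝ → ℝ) (z : ℝ × ℝ) : ℝ :=
  pd1 u z * pd2 w z - pd2 u z * pd1 w z

lemma pd_comb (f1 f2 : ℝ × ℝ → ℝ) (hf1 : Differentiable ℝ f1) (hf2 : Differentiable ℝ f2)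
    (e1 e2 α β : ℝ) (z : ℝ × ℝ) :
    pd1 (fun z => e1 * z.1 + e2 * z.2 + α * f1 z + β * f2 z) z
      = e1 + α * pd1 f1 z + β * pd1 f2 z ∧
    pd2 (fun z => e1 * z.1 + e2 * z.2 + α * f1 z + β * f2 z) z
      = e2 + α * pd2 f1 z + β * pd2 f2 z := by
  have H : HasFDerivAt (fun z : ℝ × ℝ => e1 * z.1 + e2 * z.2 + α * f1 z + β * f2 z)
      (e1 • ContinuousLinearMap.fst ℝ ℝ ℝ + e2 • ContinuousLinearMap.snd ℝ ℝ ℝ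
        + α • fderiv ℝ f1 z + β • fderiv ℝ f2 z) z :=
    (((hasFDerivAt_fst.const_mul e1).add (hasFDerivAt_snd.const_mul e2)).add
      ((hf1 z).hasFDerivAt.const_mul α)).add ((hf2 z).hasFDerivAt.const_mul β)
  constructor <;> simp [pd1, pd2, H.fderiv]

lemma cos_hda (μ₀ t : ℝ) : HasDerivAt (fun s : ℝ => Real.cos (μ₀ * s)) (-(Real.sin (μ₀*t)) * μ₀) t := by
  simpa [Function.comp_def] using (Real.hasDerivAt_cos (μ₀*t)).comp t ((hasDerivAt_id t).const_mul μ₀)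

lemma sin_hda (μ₀ t : ℝ) : HasDerivAt (fun s : ℝ => Real.sin (μ₀ * s)) (Real.cos (μ₀*t) * μ₀) t := by
  simpa [Function.comp_def] using (Real.hasDerivAt_sin (μ₀*t)).comp t ((hasDerivAt_id t).const_mul μ₀)

lemma Y_closed (c₁ μ₀ : ℝ) (hμ : μ₀ ≠ 0) (a b z2 : ℝ) (t : ℝ) :
    ∫ s in (0:ℝ)..t, (1/c₁) * (z2 + a * Real.sin (μ₀*s) + b * Real.cos (μ₀*s))
      = (1/c₁) * (z2 * t + a * ((1 - Real.cos (μ₀*t))/μ₀) + b * (Real.sin (μ₀*t)/μ₀)) := by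
  have F : ∀ s : ℝ, HasDerivAt
      (fun s => (1/c₁) * (z2 * s - a * (Real.cos (μ₀*s)/μ₀) + b * (Real.sin (μ₀*s)/μ₀)))
      ((1/c₁) * (z2 + a * Real.sin (μ₀*s) + b * Real.cos (μ₀*s))) s := by
    intro s
    have h1 := ((cos_hda μ₀ s).div_const μ₀).const_mul a
    have h2 := ((sin_hda μ₀ s).div_const μ₀).const_mul b
    have H := ((((hasDerivAt_id s).const_mul z2).sub h1).add h2).const_mul (1/c₁)
    refine H.congr_deriv ?_
    have hm : μ₀ / μ₀ = 1 := div_self hμ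
    linear_combination ((1/c₁) * (a*Real.sin (μ₀*s) + b*Real.cos (μ₀*s))) * hm
  rw [intervalIntegral.integral_eq_sub_of_hasDerivAt (fun s _ => F s)
      (Continuous.intervalIntegrable (by continuity) 0 t)]
  simp
  ring

/-- Verification of the Gerstner-type solution (24) of the 2D Euler–Boussinesq equations:
φ = A·v with A = diag(c₁,1/c₁)·[[1,0,cos μ₀t,−sin μ₀t],[0,1,sin μ₀t,cos μ₀t]],
v = (z₁,z₂,f¹,f²), (f¹,f²) an anti-CR pair, ρ = c₀z₂:
(i) det(dφ) = 1 − |∇f¹|², independent of t; (ii) h is independent of t. -/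
theorem gerstner_type_solution_2d
    (c₀ c₁ μ₀ : ℝ) (hc₀ : c₀ < 0) (hc₁0 : 0 < c₁) (hc₁1 : c₁ < 1)
    (hμ₀ : μ₀ ^ 2 = c₀ * c₁ / (c₁ ^ 4 - 1))
    (f1 f2 : ℝ × ℝ → ℝ) (hf1 : ContDiff ℝ 1 f1) (hf2 : ContDiff ℝ 1 f2)
    (hCR1 : ∀ z, pd1 f1 z + pd2 f2 z = 0)
    (hCR2 : ∀ z, pd2 f1 z - pd1 f2 z = 0)
    (φ1 φ2 : ℝ × ℝ → ℝ → ℝ)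
    (hφ1 : ∀ z t, φ1 z t = c₁ * (z.1 + f1 z * Real.cos (μ₀ * t) - f2 z * Real.sin (μ₀ * t)))
    (hφ2 : ∀ z t, φ2 z t = (1 / c₁) * (z.2 + f1 z * Real.sin (μ₀ * t) + f2 z * Real.cos (μ₀ * t)))
    (ρ : ℝ × ℝ → ℝ) (hρ : ∀ z, ρ z = c₀ * z.2)
    (Y : ℝ × ℝ → ℝ → ℝ) (hY : ∀ z t, Y z t = ∫ s in (0:ℝ)..t, φ2 z s)
    (h : ℝ × ℝ → ℝ → ℝ)
    (hh : ∀ z t, h z t =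
      det2 (fun z => deriv (fun s => φ1 z s) t) (fun z => φ1 z t) z
      + det2 (fun z => deriv (fun s => φ2 z s) t) (fun z => φ2 z t) z
      + det2 ρ (fun z => Y z t) z) :
    (∀ t z, det2 (fun z => φ1 z t) (fun z => φ2 z t) z
        = 1 - ((pd1 f1 z) ^ 2 + (pd2 f1 z) ^ 2))
    ∧ (∀ z t t', h z t = h z t') := by
  have hd1 : Differentiable ℝ f1 := hf1.differentiable one_ne_zero
  have hd2 : Differentiable ℝ f2 := hf2.differentiable one_ne_zero
  have hc : c₁ ≠ 0 := ne_of_gt hc₁0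
  have hden : c₁ ^ 4 - 1 < 0 := by
    have : c₁ ^ 4 < 1 := pow_lt_one₀ hc₁0.le hc₁1 (by norm_num)
    linarith
  have hμsq : 0 < μ₀ ^ 2 := by
    rw [hμ₀]; exact div_pos_of_neg_of_neg (by nlinarith) hden
  have hμ : μ₀ ≠ 0 := by
    intro h0; rw [h0] at hμsq; simp at hμsq
  have hμeq : μ₀ ^ 2 * (c₁ ^ 4 - 1) = c₀ * c₁ := by
    rw [hμ₀, div_mul_cancel₀ _ (ne_of_lt hden)]
  have hφ1f : ∀ t, (fun z => φ1 z t) = fun z : ℝ × ℝ =>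
      c₁ * z.1 + 0 * z.2 + (c₁ * Real.cos (μ₀*t)) * f1 z + (-(c₁ * Real.sin (μ₀*t))) * f2 z := by
    intro t; funext z; rw [hφ1]; ring
  have hφ2f : ∀ t, (fun z => φ2 z t) = fun z : ℝ × ℝ =>
      0 * z.1 + (1/c₁) * z.2 + ((1/c₁) * Real.sin (μ₀*t)) * f1 z + ((1/c₁) * Real.cos (μ₀*t)) * f2 z := by
    intro t; funext z; rw [hφ2]; ring
  have hu1f : ∀ t, (fun z => deriv (fun s => φ1 z s) t) = fun z : ℝ × ℝ =>
      0 * z.1 + 0 * z.2 + (c₁ * (-(Real.sin (μ₀*t)) * μ₀)) * f1 z + (-(c₁ * (Real.cos (μ₀*t) * μ₀))) * f2 z := by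
    intro t; funext z
    have hD : HasDerivAt (fun s => φ1 z s)
        (c₁ * (0 + f1 z * (-(Real.sin (μ₀*t)) * μ₀) - f2 z * (Real.cos (μ₀*t) * μ₀))) t := by
      have H := (((hasDerivAt_const t z.1).add ((cos_hda μ₀ t).const_mul (f1 z))).sub
        ((sin_hda μ₀ t).const_mul (f2 z))).const_mul c₁
      simp only [hφ1]
      exact H
    rw [hD.deriv]; ring
  have hu2f : ∀ t, (fun z => deriv (fun s => φ2 z s) t) = fun z : ℝ × ℝ =>
      0 * z.1 + 0 * z.2 + ((1/c₁) * (Real.cos (μ₀*t) * μ₀)) * f1 z + ((1/c₁) * (-(Real.sin (μ₀*t)) * μ₀)) * f2 z := by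
    intro t; funext z
    have hD : HasDerivAt (fun s => φ2 z s)
        ((1/c₁) * (0 + f1 z * (Real.cos (μ₀*t) * μ₀) + f2 z * (-(Real.sin (μ₀*t)) * μ₀))) t := by
      have H := (((hasDerivAt_const t z.2).add ((sin_hda μ₀ t).const_mul (f1 z))).add
        ((cos_hda μ₀ t).const_mul (f2 z))).const_mul (1/c₁)
      simp only [hφ2]
      exact H
    rw [hD.deriv]; ring
  have hYf : ∀ t, (fun z => Y z t) = fun z : ℝ × ℝ =>
      0 * z.1 + ((1/c₁) * t) * z.2 + ((1/c₁) * ((1 - Real.cos (μ₀*t))/μ₀)) * f1 z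
        + ((1/c₁) * (Real.sin (μ₀*t)/μ₀)) * f2 z := by
    intro t; funext z
    rw [hY]
    have he : (fun s => φ2 z s)
        = fun s => (1/c₁) * (z.2 + f1 z * Real.sin (μ₀*s) + f2 z * Real.cos (μ₀*s)) :=
      funext fun s => hφ2 z s
    rw [he, Y_closed c₁ μ₀ hμ]; ring
  have hρf : ρ = fun z : ℝ × ℝ => 0 * z.1 + c₀ * z.2 + 0 * f1 z + 0 * f2 z := by
    funext z; rw [hρ]; ring
  constructor
  · intro t z
    rw [hφ1f, hφ2f]
    obtain ⟨p11, p12⟩ := pd_comb f1 f2 hd1 hd2 c₁ 0 (c₁ * Real.cos (μ₀*t)) (-(c₁ * Real.sin (μ₀*t))) z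
    obtain ⟨p21, p22⟩ := pd_comb f1 f2 hd1 hd2 0 (1/c₁) ((1/c₁) * Real.sin (μ₀*t)) ((1/c₁) * Real.cos (μ₀*t)) z
    simp only [det2, p11, p12, p21, p22]
    have hb1 : pd1 f2 z = pd2 f1 z := by linarith [hCR2 z]
    have hb2 : pd2 f2 z = -pd1 f1 z := by linarith [hCR1 z]
    rw [hb1, hb2]
    have hsc := Real.sin_sq_add_cos_sq (μ₀*t)
    have hcc : c₁ * c₁⁻¹ = 1 := mul_inv_cancel₀ hc
    linear_combination (1 - ((pd1 f1 z)^2 + (pd2 f1 z)^2)) * hcc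
      - (c₁ * c₁⁻¹) * ((pd1 f1 z)^2 + (pd2 f1 z)^2) * hsc
  · have key : ∀ z t, h z t =
        -(c₁^2*μ₀ + μ₀/c₁^2) * ((pd1 f1 z)^2 + (pd2 f1 z)^2) - (c₀/(c₁*μ₀)) * pd1 f1 z := by
      intro z t
      rw [hh, hφ1f, hφ2f, hu1f, hu2f, hYf, hρf]
      obtain ⟨p11, p12⟩ := pd_comb f1 f2 hd1 hd2 c₁ 0 (c₁ * Real.cos (μ₀*t)) (-(c₁ * Real.sin (μ₀*t))) z
      obtain ⟨p21, p22⟩ := pd_comb f1 f2 hd1 hd2 0 (1/c₁) ((1/c₁) * Real.sin (μ₀*t)) ((1/c₁) * Real.cos (μ₀*t)) z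
      obtain ⟨q11, q12⟩ := pd_comb f1 f2 hd1 hd2 0 0 (c₁ * (-(Real.sin (μ₀*t)) * μ₀)) (-(c₁ * (Real.cos (μ₀*t) * μ₀))) z
      obtain ⟨q21, q22⟩ := pd_comb f1 f2 hd1 hd2 0 0 ((1/c₁) * (Real.cos (μ₀*t) * μ₀)) ((1/c₁) * (-(Real.sin (μ₀*t)) * μ₀)) z
      obtain ⟨r1, r2⟩ := pd_comb f1 f2 hd1 hd2 0 ((1/c₁) * t) ((1/c₁) * ((1 - Real.cos (μ₀*t))/μ₀)) ((1/c₁) * (Real.sin (μ₀*t)/μ₀)) z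
      obtain ⟨s1, s2⟩ := pd_comb f1 f2 hd1 hd2 0 c₀ 0 0 z
      simp only [det2, p11, p12, p21, p22, q11, q12, q21, q22, r1, r2, s1, s2]
      have hb1 : pd1 f2 z = pd2 f1 z := by linarith [hCR2 z]
      have hb2 : pd2 f2 z = -pd1 f1 z := by linarith [hCR1 z]
      rw [hb1, hb2]
      have hsc := Real.sin_sq_add_cos_sq (μ₀*t)
      have e1 : c₀ = μ₀^2 * (c₁^4 - 1) / c₁ := by
        field_simp
        linarith [hμeq]
      rw [e1]
      field_simp
      linear_combination (-(μ₀^2*c₁^4 + μ₀^2) * ((pd1 f1 z)^2 + (pd2 f1 z)^2)) * hsc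
    intro z t t'
    rw [key, key]
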